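/- If an infinite word x has an irrational uniform frequency of some letter a, then every word in the abelian closure of x is aperiodic (not eventually periodic). -/

import Mathlib

open Filter

/-- `u` is a factor of the infinite word `x`. -/
def Factor {A : Type*} (x : ℕ → A) (u : List A) : Prop :=
  ∃ i, u = (List.range u.length).map fun k => x (i + k)

/-- Abelian equivalence of finite words. -/
def AbEq {A : Type*} [DecidableEq A] (u v : List A) : Prop :=
  ∀ a, u.count a = v.count a

/-- `y` is in the abelian closure of `x`. -/
def InAbClosure {A : Type*} [DecidableEq A] (x y : ℕ → A) : Prop :=
  ∀ u, Factor y u → ∃ v, Factor x v ∧ AbEq u v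

/-- The maximal number of occurrences of `a` in a length-`n` factor of `x`. -/
noncomputable def supCount {A : Type*} [DecidableEq A] (x : ℕ → A) (a : A) (n : ℕ) : ℕ :=
  sSup {k | ∃ u, Factor x u ∧ u.length = n ∧ u.count a = k}

/-- The minimal number of occurrences of `a` in a length-`n` factor of `x`. -/
noncomputable def infCount {A : Type*} [DecidableEq A] (x : ℕ → A) (a : A) (n : ℕ) : ℕ :=
  sInf {k | ∃ u, Factor x u ∧ u.length = n ∧ u.count a = k}

/-- An infinite word is eventually periodic. -/
def EventuallyPeriodic {A : Type*} (y : ℕ → A) : Prop :=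
  ∃ N p : ℕ, 0 < p ∧ ∀ i, N ≤ i → y (i + p) = y i

theorem irrational_frequency_aperiodic {A : Type*} [DecidableEq A]
    (x : ℕ → A) (a : A) (α : ℝ) (hα : Irrational α)
    (hsup : Tendsto (fun n => (supCount x a n : ℝ) / n) atTop (nhds α))
    (hinf : Tendsto (fun n => (infCount x a n : ℝ) / n) atTop (nhds α)) :
    ∀ y, InAbClosure x y → ¬ EventuallyPeriodic y := by
  intro y hy hep
  obtain ⟨N, p, hp, hper⟩ := hep
  have hiter : ∀ m i, N ≤ i → y (i + m * p) = y i := by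
    intro m
    induction m with
    | zero => simp
    | succ m ih =>
      intro i hi
      have h : i + (m + 1) * p = (i + m * p) + p := by ring
      rw [h, hper _ (le_trans hi (Nat.le_add_right _ _)), ih i hi]
  set c := ((List.range p).map (fun k => y (N + k))).count a with hc
  have hcount : ∀ m, ((List.range (m * p)).map (fun k => y (N + k))).count a = m * c := by
    intro m
    induction m with
    | zero => simp
    | succ m ih =>
      have h1 : (m + 1) * p = m * p + p := by ring
      rw [h1, List.range_add, List.map_append, List.count_append, ih, List.map_map]
      have h2 : ((fun k => y (N + k)) ∘ (fun j => m * p + j)) = fun j => y (N + j) := by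
        funext j
        have : N + (m * p + j) = (N + j) + m * p := by ring
        simp only [Function.comp_apply, this, hiter m (N + j) (Nat.le_add_right _ _)]
      rw [h2]
      ring
  -- key: for each m, m*c is the count of a factor of x of length m*p
  have hkey : ∀ m, infCount x a (m * p) ≤ m * c ∧ m * c ≤ supCount x a (m * p) := by
    intro m
    have hfac : Factor y ((List.range (m * p)).map (fun k => y (N + k))) := by
      refine ⟨N, ?_⟩
      simp
    obtain ⟨v, hvf, hab⟩ := hy _ hfac
    have hperm : List.Perm ((List.range (m * p)).map (fun k => y (N + k))) v :=
      List.perm_iff_count.mpr (fun b => hab b)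
    have hvlen : v.length = m * p := by
      rw [← hperm.length_eq]; simp
    have hvcount : v.count a = m * c := by
      rw [← hab a, hcount m]
    have hmem : m * c ∈ {k | ∃ u, Factor x u ∧ u.length = m * p ∧ u.count a = k} :=
      ⟨v, hvf, hvlen, hvcount⟩
    constructor
    · exact Nat.sInf_le hmem
    · refine le_csSup ⟨m * p, ?_⟩ hmem
      rintro k ⟨u, _, hul, huc⟩
      rw [← huc, ← hul]
      exact List.count_le_length
  have hp0 : (0 : ℝ) < p := by exact_mod_cast hp
  have hmp : Tendsto (fun m : ℕ => m * p) atTop atTop := by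
    refine tendsto_atTop.mpr fun b => eventually_atTop.mpr ⟨b, fun m hm => ?_⟩
    exact le_trans hm (Nat.le_mul_of_pos_right m hp)
  have hs : Tendsto (fun m : ℕ => (supCount x a (m * p) : ℝ) / ((m : ℝ) * p)) atTop (nhds α) := by
    have := hsup.comp hmp
    simpa [Function.comp_def, Nat.cast_mul] using this
  have hi : Tendsto (fun m : ℕ => (infCount x a (m * p) : ℝ) / ((m : ℝ) * p)) atTop (nhds α) := by
    have := hinf.comp hmp
    simpa [Function.comp_def, Nat.cast_mul] using this
  have hev1 : ∀ᶠ m : ℕ in atTop, (c : ℝ) / p ≤ (supCount x a (m * p) : ℝ) / ((m : ℝ) * p) := by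
    filter_upwards [eventually_ge_atTop 1] with m hm
    have hm0 : (0 : ℝ) < m := by exact_mod_cast hm
    have h1 : ((m * c : ℕ) : ℝ) / ((m : ℝ) * p) = (c : ℝ) / p := by
      push_cast
      rw [mul_div_mul_left _ _ (ne_of_gt hm0)]
    rw [← h1]
    apply div_le_div_of_nonneg_right ?_ ?_
    · exact_mod_cast (hkey m).2
    · positivity
  have hev2 : ∀ᶠ m : ℕ in atTop, (infCount x a (m * p) : ℝ) / ((m : ℝ) * p) ≤ (c : ℝ) / p := by
    filter_upwards [eventually_ge_atTop 1] with m hm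
    have hm0 : (0 : ℝ) < m := by exact_mod_cast hm
    have h1 : ((m * c : ℕ) : ℝ) / ((m : ℝ) * p) = (c : ℝ) / p := by
      push_cast
      rw [mul_div_mul_left _ _ (ne_of_gt hm0)]
    rw [← h1]
    apply div_le_div_of_nonneg_right ?_ ?_
    · exact_mod_cast (hkey m).1
    · positivity
  have hle1 : (c : ℝ) / p ≤ α := ge_of_tendsto hs hev1
  have hle2 : α ≤ (c : ℝ) / p := le_of_tendsto hi hev2
  have heq : α = (c : ℝ) / p := le_antisymm hle2 hle1
  exact hα ⟨(c : ℚ) / p, by push_cast; rw [heq]⟩
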